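/- Let n ≥ 1 and q ≥ 2. There exists a constant c₀ > 0, depending only on q, such that for every x ∈ ℝⁿ and every unit vector e ∈ ℝⁿ, ∫₀¹ |x + t e|^{q−2} (1−t) dt ≥ c₀. -/

import Mathlib

open MeasureTheory

/-- **Uniform lower bound on the key integral** (inequality (3.5)): for `q ≥ 2` there is
`c₀ > 0`, depending only on `q`, such that for every `x ∈ ℝⁿ` and every unit vector `e`,
`∫₀¹ |x + t e|^{q-2} (1-t) dt ≥ c₀`. -/
theorem integral_lower_bound (q : ℝ) (hq : 2 ≤ q) :
    ∃ c₀ : ℝ, 0 < c₀ ∧ ∀ (n : ℕ), 1 ≤ n → ∀ x e : EuclideanSpace ℝ (Fin n), ‖e‖ = 1 →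
      c₀ ≤ ∫ t in (0:ℝ)..1, ‖x + t • e‖ ^ (q - 2) * (1 - t) := by
  refine ⟨(1/4 : ℝ) ^ (q - 2) / 32, by positivity, ?_⟩
  intro n hn x e he
  set s : ℝ := inner ℝ x e with hs
  have hq2 : (0:ℝ) ≤ q - 2 := by linarith
  have hcont : Continuous fun t : ℝ => ‖x + t • e‖ ^ (q - 2) * (1 - t) := by
    apply Continuous.mul
    · exact (Continuous.norm (by continuity)).rpow_const (fun t => Or.inr hq2)
    · continuity
  have hnorm : ∀ t : ℝ, |t + s| ≤ ‖x + t • e‖ := by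
    intro t
    have hinner : (‖x + t • e‖:ℝ)^2 = ‖x‖^2 + 2 * t * s + t^2 := by
      rw [@norm_add_sq_real]
      rw [real_inner_smul_right, norm_smul, he]
      simp [hs, mul_pow]
      ring
    have hcs : |s| ≤ ‖x‖ := by
      have := abs_real_inner_le_norm x e
      rwa [he, mul_one] at this
    have h1 : (t + s)^2 ≤ ‖x + t • e‖^2 := by
      nlinarith [mul_self_le_mul_self (abs_nonneg s) hcs, sq_abs s]
    have h2 := Real.sqrt_le_sqrt h1
    rwa [Real.sqrt_sq_eq_abs, Real.sqrt_sq (norm_nonneg _)] at h2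
  -- general subinterval lemma
  have key : ∀ a b : ℝ, 0 ≤ a → b ≤ 1 → b - a = 1/8 →
      (∀ t ∈ Set.Icc a b, (1/4:ℝ) ≤ ‖x + t • e‖ ∧ (1/4:ℝ) ≤ 1 - t) →
      (1/4 : ℝ) ^ (q - 2) / 32 ≤ ∫ t in (0:ℝ)..1, ‖x + t • e‖ ^ (q - 2) * (1 - t) := by
    intro a b ha hb hab hbound
    have hab' : a ≤ b := by linarith
    have hint : ∀ u v : ℝ, IntervalIntegrable
        (fun t => ‖x + t • e‖ ^ (q - 2) * (1 - t)) volume u v :=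
      fun u v => hcont.intervalIntegrable u v
    have hsplit : (∫ t in (0:ℝ)..1, ‖x + t • e‖ ^ (q - 2) * (1 - t))
        = (∫ t in (0:ℝ)..a, ‖x + t • e‖ ^ (q - 2) * (1 - t))
        + (∫ t in a..b, ‖x + t • e‖ ^ (q - 2) * (1 - t))
        + (∫ t in b..(1:ℝ), ‖x + t • e‖ ^ (q - 2) * (1 - t)) := by
      rw [intervalIntegral.integral_add_adjacent_intervals (hint 0 a) (hint a b),
        intervalIntegral.integral_add_adjacent_intervals (hint 0 b) (hint b 1)]
    have hnn : ∀ u v : ℝ, u ≤ v → v ≤ 1 →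
        (0:ℝ) ≤ ∫ t in u..v, ‖x + t • e‖ ^ (q - 2) * (1 - t) := by
      intro u v huv hv1
      apply intervalIntegral.integral_nonneg huv
      intro t ht
      have : t ≤ 1 := le_trans ht.2 hv1
      have h1 : (0:ℝ) ≤ ‖x + t • e‖ ^ (q - 2) := Real.rpow_nonneg (norm_nonneg _) _
      nlinarith
    have hmid : (1/4 : ℝ) ^ (q - 2) / 32
        ≤ ∫ t in a..b, ‖x + t • e‖ ^ (q - 2) * (1 - t) := by
      have hconst : (∫ _ in a..b, ((1/4 : ℝ) ^ (q - 2) * (1/4))) = (b - a) • ((1/4 : ℝ) ^ (q - 2) * (1/4)) :=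
        intervalIntegral.integral_const _
      have hmono : (∫ _ in a..b, ((1/4 : ℝ) ^ (q - 2) * (1/4)))
          ≤ ∫ t in a..b, ‖x + t • e‖ ^ (q - 2) * (1 - t) := by
        apply intervalIntegral.integral_mono_on hab' (intervalIntegrable_const) (hint a b)
        intro t ht
        obtain ⟨h1, h2⟩ := hbound t ht
        have h3 : (1/4 : ℝ) ^ (q - 2) ≤ ‖x + t • e‖ ^ (q - 2) :=
          Real.rpow_le_rpow (by norm_num) h1 hq2
        have h4 : (0:ℝ) ≤ (1/4:ℝ) ^ (q-2) := by positivity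
        nlinarith
      rw [hconst, hab] at hmono
      calc (1/4 : ℝ) ^ (q - 2) / 32 = (1/8 : ℝ) • ((1/4 : ℝ) ^ (q - 2) * (1/4)) := by
            simp [smul_eq_mul]; ring
        _ ≤ _ := hmono
    have h01 := hnn 0 a (by linarith) (by linarith)
    have hb1 := hnn b 1 hb le_rfl
    linarith [hsplit ▸ (by linarith [hmid, h01, hb1] :
      (1/4 : ℝ) ^ (q - 2) / 32 ≤ (∫ t in (0:ℝ)..a, ‖x + t • e‖ ^ (q - 2) * (1 - t))
        + (∫ t in a..b, ‖x + t • e‖ ^ (q - 2) * (1 - t))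
        + (∫ t in b..(1:ℝ), ‖x + t • e‖ ^ (q - 2) * (1 - t)))]
  by_cases hcase : -3/8 ≤ s
  · apply key (5/8) (3/4) (by norm_num) (by norm_num) (by norm_num)
    intro t ht
    have h1 : (1/4 : ℝ) ≤ |t + s| := by
      rw [abs_of_nonneg (by linarith [ht.1])]
      linarith [ht.1]
    exact ⟨le_trans h1 (hnorm t), by linarith [ht.2]⟩
  · push_neg at hcase
    apply key 0 (1/8) le_rfl (by norm_num) (by norm_num)
    intro t ht
    have h1 : (1/4 : ℝ) ≤ |t + s| := by
      rw [abs_of_nonpos (by linarith [ht.2])]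
      linarith [ht.2]
    exact ⟨le_trans h1 (hnorm t), by linarith [ht.2]⟩
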